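/- Let M be a compact topological space and let d and d' be two metrics on M that both induce the topology of M. If a collection 𝒜 of subsets of M is a null family with respect to the metric d, then 𝒜 is a null family with respect to the metric d'. In other words, for a collection of subsets of a compact metrizable space, being a null family does not depend on the choice of compatible metric. -/

import Mathlib

/-- For a collection of subsets of a compact space, being a null family (for each
`ε > 0`, only finitely many members have diameter greater than `ε`) does not depend on
the choice of metric compatible with the topology. -/
theorem nullFamily_independent_of_metric {M : Type*} [t : TopologicalSpace M]
    [CompactSpace M] (m₁ m₂ : MetricSpace M)
    (h₁ : m₁.toUniformSpace.toTopologicalSpace = t)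
    (h₂ : m₂.toUniformSpace.toTopologicalSpace = t)
    (𝒜 : Set (Set M))
    (hnull : ∀ ε : ℝ, 0 < ε →
      {A ∈ 𝒜 | ε < @Metric.diam M m₁.toPseudoMetricSpace A}.Finite) :
    ∀ ε : ℝ, 0 < ε →
      {A ∈ 𝒜 | ε < @Metric.diam M m₂.toPseudoMetricSpace A}.Finite := by
  subst h₁
  intro ε hε
  have hc : @CompactSpace M m₁.toUniformSpace.toTopologicalSpace := ‹_›
  have hcont : @Continuous M M m₁.toUniformSpace.toTopologicalSpace
      m₂.toUniformSpace.toTopologicalSpace id := by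
    rw [h₂]
    exact @continuous_id M m₁.toUniformSpace.toTopologicalSpace
  have hu : @UniformContinuous M M m₁.toUniformSpace m₂.toUniformSpace id :=
    @CompactSpace.uniformContinuous_of_continuous M M m₁.toUniformSpace
      m₂.toUniformSpace hc id hcont
  rw [@Metric.uniformContinuous_iff M M m₁.toPseudoMetricSpace m₂.toPseudoMetricSpace] at hu
  obtain ⟨δ, hδ, hδε⟩ := hu (ε / 2) (by linarith)
  apply (hnull (δ / 2) (by linarith)).subset
  intro A ⟨hA, hdiam⟩
  refine ⟨hA, ?_⟩
  by_contra h
  push_neg at h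
  have : @Metric.diam M m₂.toPseudoMetricSpace A ≤ ε / 2 := by
    apply Metric.diam_le_of_forall_dist_le (by linarith)
    intro x hx y hy
    have hxy : @dist M m₁.toPseudoMetricSpace.toDist x y < δ :=
      lt_of_le_of_lt (@Metric.dist_le_diam_of_mem M A x y m₁.toPseudoMetricSpace
        (@Metric.isBounded_of_compactSpace M A m₁.toPseudoMetricSpace hc) hx hy) (by linarith)
    exact le_of_lt (hδε hxy)
  linarith
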